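/- Let L be the relational first-order language (with equality) whose relation symbols are a nullary symbol E, unary symbols F and G, and a binary symbol H, and let L' extend L by one additional unary relation symbol B. Let φ be the L'-sentence E ∧ (∀ y, F y ∨ B y) ∧ (∀ y', G y' ∨ ¬ B y') ∧ (∀ y y', H y y' ∨ B y ∨ ¬ B y'). For a nonempty L-structure M with interpretations E^M, F^M, G^M, H^M, define semantically H^0_M y y' := (y ≠ y'), H^k_M y y' := ∀ y₁, H^{k-1}_M y y₁ ∨ H^M y₁ y' for k > 0, and (G∘H^i∘F)_M := ∀ y', (∀ y, G^M y ∨ H^i_M y y') ∨ F^M y'. Suppose ∃B.φ is first-order definable, i.e., there exists an L-sentence χ such that every nonempty L-structure M satisfies χ if and only if there exists a predicate B₀ on the domain of M making (M, B₀) a model of φ. Then there exists k ≥ 0 such that every nonempty L-structure M satisfies χ if and only if E^M ∧ ⋀_{i=0}^k (G∘H^i∘F)_M holds. -/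

import Mathlib

open FirstOrder FirstOrder.Language

/-- Relation symbols of the language `L`: a nullary `E`, unary `F` and `G`, binary `H`. -/
inductive LRel : ℕ → Type
  | E : LRel 0
  | F : LRel 1
  | G : LRel 1
  | H : LRel 2

/-- Relation symbols of the language `L'` extending those of `L` by a unary `B`. -/
inductive LRelB : ℕ → Type
  | E : LRelB 0
  | F : LRelB 1
  | G : LRelB 1
  | H : LRelB 2
  | B : LRelB 1

/-- The relational language `L` with nullary `E`, unary `F`, `G` and binary `H`. -/
def L : FirstOrder.Language where
  Functions := fun _ => Empty
  Relations := LRel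

/-- The relational language `L'` extending `L` by one unary relation symbol `B`. -/
def L' : FirstOrder.Language where
  Functions := fun _ => Empty
  Relations := LRelB

/-- The `L'`-sentence
`φ = E ∧ (∀ y, F y ∨ B y) ∧ (∀ y', G y' ∨ ¬ B y') ∧ (∀ y y', H y y' ∨ B y ∨ ¬ B y')`. -/
def phiSent : L'.Sentence :=
  (Relations.boundedFormula (LRelB.E) ![]) ⊓
  (∀' (Relations.boundedFormula₁ LRelB.F &0 ⊔ Relations.boundedFormula₁ LRelB.B &0)) ⊓
  (∀' (Relations.boundedFormula₁ LRelB.G &0 ⊔ ∼(Relations.boundedFormula₁ LRelB.B &0))) ⊓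
  (∀' ∀' (Relations.boundedFormula₂ LRelB.H &0 &1 ⊔ Relations.boundedFormula₁ LRelB.B &0 ⊔
    ∼(Relations.boundedFormula₁ LRelB.B &1)))

/-- The expansion of an `L`-structure `M` by a predicate `B₀` interpreting
the additional unary relation symbol `B` of `L'`. -/
def extStruct (M : Type*) [L.Structure M] (B₀ : M → Prop) : L'.Structure M where
  funMap := fun {_} f => Empty.elim f
  RelMap := fun {n} r xs =>
    match n, r, xs with
    | 0, LRelB.E, xs => Structure.RelMap (L := L) LRel.E xs
    | 1, LRelB.F, xs => Structure.RelMap (L := L) LRel.F xs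
    | 1, LRelB.G, xs => Structure.RelMap (L := L) LRel.G xs
    | 1, LRelB.B, xs => B₀ (xs 0)
    | 2, LRelB.H, xs => Structure.RelMap (L := L) LRel.H xs

/-- The interpretation `E^M` of the nullary symbol `E`. -/
def EM (M : Type*) [L.Structure M] : Prop :=
  Structure.RelMap (L := L) LRel.E (![] : Fin 0 → M)

/-- The interpretation `F^M` of the unary symbol `F`. -/
def FM (M : Type*) [L.Structure M] (y : M) : Prop :=
  Structure.RelMap (L := L) LRel.F ![y]

/-- The interpretation `G^M` of the unary symbol `G`. -/
def GM (M : Type*) [L.Structure M] (y : M) : Prop :=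
  Structure.RelMap (L := L) LRel.G ![y]

/-- The interpretation `H^M` of the binary symbol `H`. -/
def HM (M : Type*) [L.Structure M] (y y' : M) : Prop :=
  Structure.RelMap (L := L) LRel.H ![y, y']

/-- The semantic iterates `H^k_M`:
`H^0_M y y' := y ≠ y'` and `H^(k+1)_M y y' := ∀ y₁, H^k_M y y₁ ∨ H^M y₁ y'`. -/
def HiterM (M : Type*) [L.Structure M] : ℕ → M → M → Prop
  | 0 => fun y y' => y ≠ y'
  | k + 1 => fun y y' => ∀ y₁, HiterM M k y y₁ ∨ HM M y₁ y'

/-- The semantic condition `(G∘H^i∘F)_M := ∀ y', (∀ y, G^M y ∨ H^i_M y y') ∨ F^M y'`. -/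
def GHF (M : Type*) [L.Structure M] (i : ℕ) : Prop :=
  ∀ y' : M, (∀ y : M, GM M y ∨ HiterM M i y y') ∨ FM M y'

universe u
section Aux

/-- Unfolding the realization of `phiSent` in the expansion by `B₀`. -/
theorem realize_phi (M : Type*) [L.Structure M] (B₀ : M → Prop) :
    (@FirstOrder.Language.Sentence.Realize L' M (extStruct M B₀) phiSent) ↔
    (EM M ∧ (∀ y, FM M y ∨ B₀ y) ∧ (∀ y, GM M y ∨ ¬ B₀ y) ∧
      (∀ y y', HM M y y' ∨ B₀ y ∨ ¬ B₀ y')) := by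
  simp only [phiSent, Sentence.Realize, Formula.Realize, BoundedFormula.realize_inf,
    BoundedFormula.realize_all, BoundedFormula.realize_sup, BoundedFormula.realize_not,
    BoundedFormula.realize_rel, BoundedFormula.realize_rel₁, BoundedFormula.realize_rel₂,
    BoundedFormula.realize_rel (L := L') (R := (LRelB.E : L'.Relations 0)),
    BoundedFormula.realize_rel₁ (L := L') (R := (LRelB.F : L'.Relations 1)),
    BoundedFormula.realize_rel₁ (L := L') (R := (LRelB.G : L'.Relations 1)),
    BoundedFormula.realize_rel₁ (L := L') (R := (LRelB.B : L'.Relations 1)),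
    BoundedFormula.realize_rel₂ (L := L') (R := (LRelB.H : L'.Relations 2)),
    Term.realize_var, Sum.elim_inr, Function.comp_apply]
  simp only [extStruct, EM, FM, GM, HM]
  simp [Fin.snoc, and_assoc]
  constructor <;> rintro ⟨h1, h2, h3, h4⟩ <;>
    refine ⟨by convert h1 using 1 <;>
        exact Iff.of_eq (congrArg (Structure.RelMap (L := L) LRel.E) (Subsingleton.elim _ _)), h2, h3,
      fun y y' => by have := h4 y y'; tauto⟩

theorem hIter_comp {M : Type*} [L.Structure M] :
    ∀ (i : ℕ) {y y' z : M}, ¬ HM M y y' → ¬ HiterM M i y' z → ¬ HiterM M (i+1) y z := by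
  intro i
  induction i with
  | zero =>
    intro y y' z h1 h2 h3
    have hz : y' = z := not_not.mp h2
    rcases h3 y with h | h
    · exact (h rfl).elim
    · exact h1 (hz ▸ h)
  | succ i ih =>
    intro y y' z h1 h2 h3
    rw [show HiterM M (i+1+1) y z = ∀ y₁, HiterM M (i+1) y y₁ ∨ HM M y₁ z from rfl] at h3
    have h2' : ¬ ∀ y₁, HiterM M i y' y₁ ∨ HM M y₁ z := h2
    push_neg at h2'
    obtain ⟨y₁, hy₁a, hy₁b⟩ := h2'
    rcases h3 y₁ with h | h
    · exact ih h1 hy₁a h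
    · exact hy₁b h

/-- Semantic characterization of `∃ B₀` making `φ` hold. -/
theorem exists_B_iff (M : Type*) [L.Structure M] :
    (∃ B₀ : M → Prop, @FirstOrder.Language.Sentence.Realize L' M
        (extStruct M B₀) phiSent) ↔ (EM M ∧ ∀ i, GHF M i) := by
  constructor
  · rintro ⟨B₀, hB⟩
    rw [realize_phi] at hB
    obtain ⟨hE, h2, h3, h4⟩ := hB
    refine ⟨hE, fun i => ?_⟩
    have key : ∀ i (y y' : M), B₀ y' → B₀ y ∨ HiterM M i y y' := by
      intro i
      induction i with
      | zero =>
        intro y y' hy'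
        by_cases h : y = y'
        · exact Or.inl (h ▸ hy')
        · exact Or.inr h
      | succ i ih =>
        intro y y' hy'
        by_cases hy : B₀ y
        · exact Or.inl hy
        · refine Or.inr fun y₁ => ?_
          by_cases hy₁ : B₀ y₁
          · rcases ih y y₁ hy₁ with h | h
            · exact absurd h hy
            · exact Or.inl h
          · rcases h4 y₁ y' with h | h | h
            · exact Or.inr h
            · exact absurd h hy₁
            · exact absurd hy' h
    intro y'
    by_cases hF : FM M y'
    · exact Or.inr hF
    · have hBy' : B₀ y' := (h2 y').resolve_left hF
      refine Or.inl fun y => ?_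
      rcases h3 y with h | h
      · exact Or.inl h
      · exact Or.inr ((key i y y' hBy').resolve_left h)
  · rintro ⟨hE, hGHF⟩
    refine ⟨fun y => ∃ i y', ¬ FM M y' ∧ ¬ HiterM M i y y', ?_⟩
    rw [realize_phi]
    refine ⟨hE, ?_, ?_, ?_⟩
    · intro y
      by_cases hF : FM M y
      · exact Or.inl hF
      · exact Or.inr ⟨0, y, hF, fun h => h rfl⟩
    · intro y
      by_cases hG : GM M y
      · exact Or.inl hG
      · refine Or.inr ?_
        rintro ⟨i, y', hF, hH⟩
        rcases hGHF i y' with h | h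
        · rcases h y with h' | h'
          · exact hG h'
          · exact hH h'
        · exact hF h
    · intro y y'
      by_cases hH : HM M y y'
      · exact Or.inl hH
      · by_cases hB : ∃ i z, ¬ FM M z ∧ ¬ HiterM M i y' z
        · obtain ⟨i, z, hF, hHi⟩ := hB
          exact Or.inr (Or.inl ⟨i + 1, z, hF, hIter_comp i hH hHi⟩)
        · exact Or.inr (Or.inr hB)

end Aux
section Syn

/-- A first-order formula (in two free variables) defining `HiterM i`. -/
def hIterF : ℕ → L.Formula (Fin 2)
  | 0 => ∼(Term.equal (var (0 : Fin 2)) (var (1 : Fin 2)))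
  | k + 1 => ∀' ((BoundedFormula.relabel
        (fun j : Fin 2 => if j = 0 then Sum.inl (0 : Fin 2) else Sum.inr (0 : Fin 1))
        (hIterF k)) ⊔
      Relations.boundedFormula₂ LRel.H (var (Sum.inr 0)) (var (Sum.inl 1)))

theorem realize_hIterF {M : Type*} [L.Structure M] :
    ∀ (i : ℕ) (v : Fin 2 → M), (hIterF i).Realize v ↔ HiterM M i (v 0) (v 1) := by
  intro i
  induction i with
  | zero =>
    intro v
    simp [hIterF, HiterM, Formula.Realize, Formula.realize_equal]
    rfl
  | succ i ih =>
    intro v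
    rw [show HiterM M (i+1) (v 0) (v 1) = ∀ y₁, HiterM M i (v 0) y₁ ∨ HM M y₁ (v 1) from rfl]
    simp only [hIterF, Formula.Realize, BoundedFormula.realize_all, BoundedFormula.realize_sup,
      BoundedFormula.realize_relabel, BoundedFormula.realize_rel₂, Term.realize_var,
      BoundedFormula.realize_rel₂ (L := L) (R := (LRel.H : L.Relations 2)),
      Sum.elim_inr, Sum.elim_inl]
    refine forall_congr' fun a => or_congr ?_ ?_
    · have h1 : ((Sum.elim v ((Fin.snoc default a : Fin 1 → M) ∘ Fin.castAdd 0)) ∘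
          fun j : Fin 2 => if j = 0 then Sum.inl (0 : Fin 2) else Sum.inr (0 : Fin 1))
          = ![v 0, a] := by
        funext j
        fin_cases j <;> simp [Fin.snoc]
      rw [h1, show ((Fin.snoc default a : Fin 1 → M) ∘ Fin.natAdd 1 : Fin 0 → M)
        = default from Subsingleton.elim _ _]
      have := ih ![v 0, a]
      rw [Formula.Realize] at this
      rw [this]
      simp
    · have h2 : (Fin.snoc default a : Fin 1 → M) 0 = a := by simp [Fin.snoc]
      rw [h2]
      rfl

end Syn
/-- The `L`-sentence for `E`. -/
def eSent : L.Sentence := Relations.boundedFormula LRel.E ![]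

theorem realize_eSent (M : Type*) [L.Structure M] : M ⊨ eSent ↔ EM M := by
  simp only [eSent, Sentence.Realize, Formula.Realize, BoundedFormula.realize_rel,
    BoundedFormula.realize_rel (L := L) (R := (LRel.E : L.Relations 0)), EM]
  constructor <;> intro h <;> (convert h using 2 <;> exact Subsingleton.elim _ _)

/-- The `L`-sentence for `(G∘H^i∘F)`. -/
def ghfSent (i : ℕ) : L.Sentence :=
  ∀' ((∀' (Relations.boundedFormula₁ LRel.G &1 ⊔
      BoundedFormula.relabel (fun j : Fin 2 => Sum.inr (if j = 0 then (1 : Fin 2) else 0))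
        (hIterF i))) ⊔
    Relations.boundedFormula₁ LRel.F &0)

theorem realize_ghfSent (M : Type*) [L.Structure M] (i : ℕ) :
    M ⊨ ghfSent i ↔ GHF M i := by
  simp only [ghfSent, Sentence.Realize, Formula.Realize, BoundedFormula.realize_all,
    BoundedFormula.realize_sup, BoundedFormula.realize_rel₁, BoundedFormula.realize_relabel,
    BoundedFormula.realize_rel₁ (L := L) (R := (LRel.G : L.Relations 1)),
    BoundedFormula.realize_rel₁ (L := L) (R := (LRel.F : L.Relations 1)),
    Term.realize_var, Sum.elim_inr, Function.comp_apply, GHF]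
  refine forall_congr' fun y' => or_congr (forall_congr' fun y => or_congr ?_ ?_) ?_
  · constructor <;> intro h <;> (convert h using 2 <;> simp [Fin.snoc, GM])
  · have h1 : ((Sum.elim (default : Empty → M)
        ((Fin.snoc (Fin.snoc default y') y : Fin 2 → M) ∘ Fin.castAdd 0)) ∘
        fun j : Fin 2 => Sum.inr (if j = 0 then (1 : Fin 2) else 0)) = ![y, y'] := by
      funext j
      fin_cases j <;> simp [Fin.snoc]
    rw [h1, show (((Fin.snoc (Fin.snoc default y') y : Fin 2 → M)) ∘ Fin.natAdd 2 : Fin 0 → M)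
      = default from Subsingleton.elim _ _]
    have := realize_hIterF (M := M) i ![y, y']
    rw [Formula.Realize] at this
    rw [this]
    simp
  · constructor <;> intro h <;> (convert h using 2 <;> simp [Fin.snoc, FM])

theorem fo_definable_exists_B_iff_finite_conjunction
    (χ : L.Sentence)
    (hχ : ∀ (M : Type u) [L.Structure M] [Nonempty M],
      M ⊨ χ ↔ ∃ B₀ : M → Prop, @FirstOrder.Language.Sentence.Realize L' M
        (extStruct M B₀) phiSent) :
    ∃ k : ℕ, ∀ (M : Type u) [L.Structure M] [Nonempty M],
      M ⊨ χ ↔ (EM M ∧ ∀ i ≤ k, GHF M i) := by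
  by_cases hk : ∃ k : ℕ, ∀ (M : Type u) [L.Structure M] [Nonempty M],
      (EM M ∧ ∀ i ≤ k, GHF M i) → M ⊨ χ
  · obtain ⟨k, hk⟩ := hk
    refine ⟨k, fun M _ _ => ⟨fun h => ?_, fun h => hk M h⟩⟩
    obtain ⟨hE, hG⟩ := (exists_B_iff M).mp ((hχ M).mp h)
    exact ⟨hE, fun i _ => hG i⟩
  · exfalso
    push_neg at hk
    choose Mf instf nef h1 h2 using hk
    letI : ∀ k : ℕ, L.Structure (Mf k) := instf
    letI : ∀ k : ℕ, Nonempty (Mf k) := nef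
    set U : Ultrafilter ℕ := Filter.hyperfilter ℕ with hU
    set N := (U : Filter ℕ).Product Mf with hN
    have hNχ : ¬ N ⊨ χ := by
      rw [Ultraproduct.sentence_realize]
      intro hev
      have : {k : ℕ | Mf k ⊨ χ} ∈ U := hev
      obtain ⟨k, hkmem⟩ := Filter.nonempty_of_mem this
      exact h2 k hkmem
    have hNE : EM N := by
      rw [← realize_eSent]
      rw [Ultraproduct.sentence_realize]
      exact Filter.Eventually.of_forall fun k => (realize_eSent (Mf k)).mpr (h1 k).1
    have hNG : ∀ i, GHF N i := by
      intro i
      rw [← realize_ghfSent]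
      rw [Ultraproduct.sentence_realize]
      have hmem : {k : ℕ | i ≤ k} ∈ (U : Filter ℕ) := by
        apply Filter.mem_hyperfilter_of_finite_compl
        have : {k : ℕ | i ≤ k}ᶜ = Set.Iio i := by
          ext k; simp [Set.Iio, not_le]
        rw [this]
        exact Set.finite_Iio i
      refine Filter.mem_of_superset hmem fun k hik => ?_
      exact (realize_ghfSent (Mf k) i).mpr ((h1 k).2 i hik)
    have : N ⊨ χ := (hχ N).mpr ((exists_B_iff N).mpr ⟨hNE, hNG⟩)
    exact hNχ this
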